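/- The tensor product of two normal g-crystals, equipped with Kashiwara's tensor product rule, is again a normal g-crystal; in particular, for all (a,b) in A × B one has ε_i((a,b)) = max{n | ẽ_i^n (a,b) ≠ 0} and φ_i((a,b)) = max{n | f̃_i^n (a,b) ≠ 0}. -/

import Mathlib

/-- The underlying data of a `g`-crystal: the weight map, the maps `ε i`, `φ i`,
and Kashiwara's operators `ẽ i`, `f̃ i` (the value `none` plays the role of `0`). -/
structure CrystalData (I : Type) (A : Type) where
  wt : A → I → ℤ
  eps : I → A → ℤ
  phi : I → A → ℤ
  e : I → A → Option A
  f : I → A → Option A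

namespace CrystalData

/-- Iterate a partially defined map `n` times. -/
def iter {A : Type} (g : A → Option A) : ℕ → A → Option A
  | 0, a => some a
  | n + 1, a => (iter g n a).bind g

variable {I A B : Type}

/-- The crystal axioms, relative to a family of simple roots `α i ∈ ℤ[I]`:
`wt (ẽᵢ a) = wt a + αᵢ`, `wt (f̃ᵢ a) = wt a - αᵢ`, `(wt a)ᵢ = φᵢ a - εᵢ a`,
and `f̃ᵢ a = b ↔ ẽᵢ b = a`. -/
def IsCrystal (α : I → I → ℤ) (Cr : CrystalData I A) : Prop :=
  (∀ i a b, Cr.e i a = some b → ∀ j, Cr.wt b j = Cr.wt a j + α i j) ∧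
  (∀ i a b, Cr.f i a = some b → ∀ j, Cr.wt b j = Cr.wt a j - α i j) ∧
  (∀ i a, Cr.wt a i = Cr.phi i a - Cr.eps i a) ∧
  (∀ i a b, Cr.f i a = some b ↔ Cr.e i b = some a)

/-- Normality: `εᵢ a = max {n | ẽᵢⁿ a ≠ 0}` and `φᵢ a = max {n | f̃ᵢⁿ a ≠ 0}`
(both finite).  Since `ẽᵢⁿ a = 0` implies `ẽᵢ^(n+1) a = 0`, the maximum of the
set `{n | ẽᵢⁿ a ≠ 0}` is the unique `n ≥ 0` with `ẽᵢⁿ a ≠ 0` and `ẽᵢ^(n+1) a = 0`. -/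
def IsNormal (Cr : CrystalData I A) : Prop :=
  ∀ i a,
    (0 ≤ Cr.eps i a ∧ iter (Cr.e i) (Cr.eps i a).toNat a ≠ none ∧
      iter (Cr.e i) ((Cr.eps i a).toNat + 1) a = none) ∧
    (0 ≤ Cr.phi i a ∧ iter (Cr.f i) (Cr.phi i a).toNat a ≠ none ∧
      iter (Cr.f i) ((Cr.phi i a).toNat + 1) a = none)

/-- Kashiwara's tensor product rule on the data of two crystals. -/
def tensor (CA : CrystalData I A) (CB : CrystalData I B) : CrystalData I (A × B) where
  wt := fun p i => CA.wt p.1 i + CB.wt p.2 i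
  eps := fun i p => max (CA.eps i p.1) (CA.eps i p.1 + CB.eps i p.2 - CA.phi i p.1)
  phi := fun i p => max (CB.phi i p.2) (CA.phi i p.1 + CB.phi i p.2 - CB.eps i p.2)
  e := fun i p =>
    if CB.eps i p.2 ≤ CA.phi i p.1 then (CA.e i p.1).map (fun a => (a, p.2))
    else (CB.e i p.2).map (fun b => (p.1, b))
  f := fun i p =>
    if CB.eps i p.2 < CA.phi i p.1 then (CA.f i p.1).map (fun a => (a, p.2))
    else (CB.f i p.2).map (fun b => (p.1, b))

end CrystalData

namespace CrystalData

variable {I A B : Type}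

theorem iter_succ (g : A → Option A) (n : ℕ) (a : A) :
    iter g (n + 1) a = (iter g n a).bind g := rfl

theorem iter_succ' (g : A → Option A) (n : ℕ) (a : A) :
    iter g (n + 1) a = (g a).bind (iter g n) := by
  induction n generalizing a with
  | zero => cases h : g a <;> simp [iter, h]
  | succ n ih =>
    rw [iter_succ, ih]
    cases h : g a <;> simp [h, iter_succ]

theorem iter_none_succ (g : A → Option A) (n : ℕ) (a : A)
    (h : iter g n a = none) : iter g (n + 1) a = none := by
  rw [iter_succ, h]; rfl

theorem iter_none_le (g : A → Option A) {m n : ℕ} (h : m ≤ n) (a : A)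
    (hm : iter g m a = none) : iter g n a = none := by
  induction n with
  | zero =>
    have : m = 0 := Nat.le_zero.mp h
    exact this ▸ hm
  | succ n ih =>
    rcases Nat.lt_or_ge m (n + 1) with h' | h'
    · exact iter_none_succ g n a (ih (Nat.lt_succ_iff.mp h'))
    · have : m = n + 1 := le_antisymm h h'
      exact this ▸ hm

theorem iter_unique (g : A → Option A) {m n : ℕ} {a : A}
    (h1 : iter g m a ≠ none) (h2 : iter g (m + 1) a = none)
    (h3 : iter g n a ≠ none) (h4 : iter g (n + 1) a = none) : m = n := by
  rcases lt_trichotomy m n with h | h | h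
  · exact absurd (iter_none_le g h a h2) h3
  · exact h
  · exact absurd (iter_none_le g h a h4) h1

theorem iter_count (g : A → Option A) (N : A → ℕ)
    (h0 : ∀ a, g a = none ↔ N a = 0)
    (h1 : ∀ a a', g a = some a' → N a = N a' + 1) (a : A) :
    iter g (N a) a ≠ none ∧ iter g (N a + 1) a = none := by
  have H : ∀ n a, N a = n → iter g n a ≠ none ∧ iter g (n + 1) a = none := by
    intro n
    induction n with
    | zero =>
      intro a hn
      constructor
      · simp [iter]
      · rw [iter_succ', (h0 a).mpr hn]
        rfl
    | succ n ih =>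
      intro a hn
      have hga : g a ≠ none := by
        intro h
        rw [(h0 a).mp h] at hn
        exact Nat.noConfusion hn
      obtain ⟨a', ha'⟩ := Option.ne_none_iff_exists'.mp hga
      have hNa' : N a' = n := by have := h1 a a' ha'; omega
      obtain ⟨ih1, ih2⟩ := ih a' hNa'
      constructor
      · rw [iter_succ', ha']
        simpa using ih1
      · rw [iter_succ', ha']
        simpa using ih2
  exact H (N a) a rfl

theorem e_eq_none_iff (Cr : CrystalData I A) (hn : IsNormal Cr) (i : I) (a : A) :
    Cr.e i a = none ↔ Cr.eps i a = 0 := by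
  obtain ⟨⟨hpos, hne, hnone⟩, -⟩ := hn i a
  constructor
  · intro h
    by_contra hne0
    have h1 : (1 : ℕ) ≤ (Cr.eps i a).toNat := by omega
    have hit : iter (Cr.e i) 1 a = none := by
      rw [iter_succ', h]; rfl
    exact hne (iter_none_le _ h1 a hit)
  · intro h
    have h1 := hnone
    rw [h] at h1
    simpa [iter] using h1

theorem f_eq_none_iff (Cr : CrystalData I A) (hn : IsNormal Cr) (i : I) (a : A) :
    Cr.f i a = none ↔ Cr.phi i a = 0 := by
  obtain ⟨-, hpos, hne, hnone⟩ := hn i a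
  constructor
  · intro h
    by_contra hne0
    have h1 : (1 : ℕ) ≤ (Cr.phi i a).toNat := by omega
    have hit : iter (Cr.f i) 1 a = none := by
      rw [iter_succ', h]; rfl
    exact hne (iter_none_le _ h1 a hit)
  · intro h
    have h1 := hnone
    rw [h] at h1
    simpa [iter] using h1

theorem e_step {α : I → I → ℤ} (Cr : CrystalData I A) (hc : IsCrystal α Cr)
    (hn : IsNormal Cr) {i : I} {a a' : A} (h : Cr.e i a = some a') :
    Cr.eps i a' = Cr.eps i a - 1 ∧ Cr.phi i a' = Cr.phi i a + 1 := by
  obtain ⟨⟨hpos, hne, hnone⟩, ⟨hpos', hne', hnone'⟩⟩ := hn i a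
  obtain ⟨⟨qpos, qne, qnone⟩, ⟨qpos', qne', qnone'⟩⟩ := hn i a'
  have hiter : ∀ n, iter (Cr.e i) (n + 1) a = iter (Cr.e i) n a' := by
    intro n; rw [iter_succ', h]; rfl
  have heps1 : Cr.eps i a ≠ 0 := by
    intro h0
    have := (e_eq_none_iff Cr hn i a).mpr h0
    rw [h] at this
    exact Option.some_ne_none _ this
  have ht : (Cr.eps i a).toNat - 1 + 1 = (Cr.eps i a).toNat := by omega
  have k1 : iter (Cr.e i) ((Cr.eps i a).toNat - 1) a' ≠ none := by
    rw [← hiter, ht]; exact hne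
  have k2 : iter (Cr.e i) ((Cr.eps i a).toNat - 1 + 1) a' = none := by
    rw [ht, ← hiter]; exact hnone
  have keps := iter_unique _ k1 k2 qne qnone
  have hf : Cr.f i a' = some a := (hc.2.2.2 i a' a).mpr h
  have hiter' : ∀ n, iter (Cr.f i) (n + 1) a' = iter (Cr.f i) n a := by
    intro n; rw [iter_succ', hf]; rfl
  have k1' : iter (Cr.f i) ((Cr.phi i a).toNat + 1) a' ≠ none := by
    rw [hiter']; exact hne'
  have k2' : iter (Cr.f i) ((Cr.phi i a).toNat + 1 + 1) a' = none := by
    rw [hiter']; exact hnone'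
  have kphi := iter_unique _ k1' k2' qne' qnone'
  constructor <;> omega

end CrystalData

namespace CrystalData

section Tensor

variable {I A B : Type} {α : I → I → ℤ} (CA : CrystalData I A) (CB : CrystalData I B)

theorem tensor_e_none (hnA : IsNormal CA) (hnB : IsNormal CB) (i : I) (p : A × B) :
    (CA.tensor CB).e i p = none ↔ (CA.tensor CB).eps i p = 0 := by
  obtain ⟨a, b⟩ := p
  have haeps := ((hnA i a).1).1
  have haphi := ((hnA i a).2).1
  have hbeps := ((hnB i b).1).1
  simp only [tensor]
  split_ifs with hcond
  · rw [Option.map_eq_none_iff, e_eq_none_iff CA hnA,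
      max_eq_left (by omega : CA.eps i a + CB.eps i b - CA.phi i a ≤ CA.eps i a)]
  · push_neg at hcond
    rw [Option.map_eq_none_iff, e_eq_none_iff CB hnB]
    constructor
    · intro h; exfalso; omega
    · intro h
      have := le_max_right (CA.eps i a) (CA.eps i a + CB.eps i b - CA.phi i a)
      omega

theorem tensor_f_none (hnA : IsNormal CA) (hnB : IsNormal CB) (i : I) (p : A × B) :
    (CA.tensor CB).f i p = none ↔ (CA.tensor CB).phi i p = 0 := by
  obtain ⟨a, b⟩ := p
  have hbphi := ((hnB i b).2).1
  have hbeps := ((hnB i b).1).1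
  simp only [tensor]
  split_ifs with hcond
  · rw [Option.map_eq_none_iff, f_eq_none_iff CA hnA]
    constructor
    · intro h; exfalso; omega
    · intro h
      have := le_max_right (CB.phi i b) (CA.phi i a + CB.phi i b - CB.eps i b)
      omega
  · push_neg at hcond
    rw [Option.map_eq_none_iff, f_eq_none_iff CB hnB,
      max_eq_left (by omega : CA.phi i a + CB.phi i b - CB.eps i b ≤ CB.phi i b)]

theorem tensor_e_step (hA : IsCrystal α CA) (hB : IsCrystal α CB)
    (hnA : IsNormal CA) (hnB : IsNormal CB) (i : I) (p q : A × B)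
    (h : (CA.tensor CB).e i p = some q) :
    (CA.tensor CB).eps i p = (CA.tensor CB).eps i q + 1 := by
  obtain ⟨a, b⟩ := p
  simp only [tensor] at h ⊢
  split_ifs at h with hcond
  · obtain ⟨x, hx, hxe⟩ := Option.map_eq_some_iff.mp h
    subst hxe
    obtain ⟨h1, h2⟩ := e_step CA hA hnA hx
    rw [max_eq_left (by omega), max_eq_left (by simp only; omega)]
    simp only
    omega
  · push_neg at hcond
    obtain ⟨x, hx, hxe⟩ := Option.map_eq_some_iff.mp h
    subst hxe
    obtain ⟨h1, h2⟩ := e_step CB hB hnB hx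
    rw [max_eq_right (by omega), max_eq_right (by simp only; omega)]
    simp only
    omega

theorem tensor_f_step (hA : IsCrystal α CA) (hB : IsCrystal α CB)
    (hnA : IsNormal CA) (hnB : IsNormal CB) (i : I) (p q : A × B)
    (h : (CA.tensor CB).f i p = some q) :
    (CA.tensor CB).phi i p = (CA.tensor CB).phi i q + 1 := by
  obtain ⟨a, b⟩ := p
  simp only [tensor] at h ⊢
  split_ifs at h with hcond
  · obtain ⟨x, hx, hxe⟩ := Option.map_eq_some_iff.mp h
    subst hxe
    have hex : CA.e i x = some a := (hA.2.2.2 i a x).mp hx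
    obtain ⟨h1, h2⟩ := e_step CA hA hnA hex
    rw [max_eq_right (by omega), max_eq_right (by simp only; omega)]
    simp only
    omega
  · push_neg at hcond
    obtain ⟨x, hx, hxe⟩ := Option.map_eq_some_iff.mp h
    subst hxe
    have hex : CB.e i x = some b := (hB.2.2.2 i b x).mp hx
    obtain ⟨h1, h2⟩ := e_step CB hB hnB hex
    rw [max_eq_left (by omega), max_eq_left (by simp only; omega)]
    simp only
    omega

end Tensor

end CrystalData



/-- The tensor product of two normal `g`-crystals, with Kashiwara's tensor product
rule, is again a normal `g`-crystal; in particular `ε i` and `φ i` of the tensor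
product are given by `max {n | ẽᵢⁿ (a,b) ≠ 0}` resp. `max {n | f̃ᵢⁿ (a,b) ≠ 0}`. -/
theorem stmt1 {I A B : Type} (α : I → I → ℤ)
    (CA : CrystalData I A) (CB : CrystalData I B)
    (hA : CrystalData.IsCrystal α CA) (hB : CrystalData.IsCrystal α CB)
    (hnA : CrystalData.IsNormal CA) (hnB : CrystalData.IsNormal CB) :
    CrystalData.IsCrystal α (CA.tensor CB) ∧ CrystalData.IsNormal (CA.tensor CB) := by
  constructor
  · refine ⟨?_, ?_, ?_, ?_⟩
    · rintro i ⟨a, b⟩ ⟨a', b'⟩ h j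
      simp only [CrystalData.tensor] at h ⊢
      split_ifs at h with hc
      · obtain ⟨x, hx, hxe⟩ := Option.map_eq_some_iff.mp h
        injection hxe with h1 h2
        subst h1; subst h2
        have := hA.1 i a x hx j
        omega
      · obtain ⟨x, hx, hxe⟩ := Option.map_eq_some_iff.mp h
        injection hxe with h1 h2
        subst h1; subst h2
        have := hB.1 i b x hx j
        omega
    · rintro i ⟨a, b⟩ ⟨a', b'⟩ h j
      simp only [CrystalData.tensor] at h ⊢
      split_ifs at h with hc
      · obtain ⟨x, hx, hxe⟩ := Option.map_eq_some_iff.mp h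
        injection hxe with h1 h2
        subst h1; subst h2
        have := hA.2.1 i a x hx j
        omega
      · obtain ⟨x, hx, hxe⟩ := Option.map_eq_some_iff.mp h
        injection hxe with h1 h2
        subst h1; subst h2
        have := hB.2.1 i b x hx j
        omega
    · rintro i ⟨a, b⟩
      simp only [CrystalData.tensor]
      have h1 := hA.2.2.1 i a
      have h2 := hB.2.2.1 i b
      rcases le_total (CB.eps i b) (CA.phi i a) with h | h
      · rw [max_eq_right (by omega : CB.phi i b ≤ CA.phi i a + CB.phi i b - CB.eps i b),
          max_eq_left (by omega : CA.eps i a + CB.eps i b - CA.phi i a ≤ CA.eps i a)]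
        omega
      · rw [max_eq_left (by omega : CA.phi i a + CB.phi i b - CB.eps i b ≤ CB.phi i b),
          max_eq_right (by omega : CA.eps i a ≤ CA.eps i a + CB.eps i b - CA.phi i a)]
        omega
    · rintro i ⟨a, b⟩ ⟨a', b'⟩
      constructor
      · intro h
        simp only [CrystalData.tensor] at h ⊢
        split_ifs at h with hc
        · obtain ⟨x, hx, hxe⟩ := Option.map_eq_some_iff.mp h
          injection hxe with h1 h2
          subst h1; subst h2
          have hex : CA.e i x = some a := (hA.2.2.2 i a x).mp hx
          obtain ⟨h1, h2⟩ := CrystalData.e_step CA hA hnA hex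
          rw [if_pos (by omega)]
          simp [hex]
        · push_neg at hc
          obtain ⟨x, hx, hxe⟩ := Option.map_eq_some_iff.mp h
          injection hxe with h1 h2
          subst h1; subst h2
          have hex : CB.e i x = some b := (hB.2.2.2 i b x).mp hx
          obtain ⟨h1, h2⟩ := CrystalData.e_step CB hB hnB hex
          rw [if_neg (by omega)]
          simp [hex]
      · intro h
        simp only [CrystalData.tensor] at h ⊢
        split_ifs at h with hc
        · obtain ⟨x, hx, hxe⟩ := Option.map_eq_some_iff.mp h
          injection hxe with h1 h2
          subst h1; subst h2
          have hfx : CA.f i x = some a' := (hA.2.2.2 i x a').mpr hx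
          obtain ⟨h1, h2⟩ := CrystalData.e_step CA hA hnA hx
          rw [if_pos (by omega)]
          simp [hfx]
        · push_neg at hc
          obtain ⟨x, hx, hxe⟩ := Option.map_eq_some_iff.mp h
          injection hxe with h1 h2
          subst h1; subst h2
          have hfx : CB.f i x = some b' := (hB.2.2.2 i x b').mpr hx
          obtain ⟨h1, h2⟩ := CrystalData.e_step CB hB hnB hx
          rw [if_neg (by omega)]
          simp [hfx]
  · intro i p
    have hepos : ∀ q : A × B, 0 ≤ (CA.tensor CB).eps i q := by
      intro q
      simp only [CrystalData.tensor]
      exact le_trans ((hnA i q.1).1).1 (le_max_left _ _)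
    have hppos : ∀ q : A × B, 0 ≤ (CA.tensor CB).phi i q := by
      intro q
      simp only [CrystalData.tensor]
      exact le_trans ((hnB i q.2).2).1 (le_max_left _ _)
    have hcountE := CrystalData.iter_count ((CA.tensor CB).e i)
      (fun q => ((CA.tensor CB).eps i q).toNat)
      (fun q => by
        show (CA.tensor CB).e i q = none ↔ ((CA.tensor CB).eps i q).toNat = 0
        rw [CrystalData.tensor_e_none CA CB hnA hnB i q]
        have := hepos q
        omega)
      (fun q q' hqq' => by
        show ((CA.tensor CB).eps i q).toNat = ((CA.tensor CB).eps i q').toNat + 1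
        have := CrystalData.tensor_e_step CA CB hA hB hnA hnB i q q' hqq'
        have := hepos q
        have := hepos q'
        omega) p
    have hcountF := CrystalData.iter_count ((CA.tensor CB).f i)
      (fun q => ((CA.tensor CB).phi i q).toNat)
      (fun q => by
        show (CA.tensor CB).f i q = none ↔ ((CA.tensor CB).phi i q).toNat = 0
        rw [CrystalData.tensor_f_none CA CB hnA hnB i q]
        have := hppos q
        omega)
      (fun q q' hqq' => by
        show ((CA.tensor CB).phi i q).toNat = ((CA.tensor CB).phi i q').toNat + 1
        have := CrystalData.tensor_f_step CA CB hA hB hnA hnB i q q' hqq'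
        have := hppos q
        have := hppos q'
        omega) p
    exact ⟨⟨hepos p, hcountE.1, hcountE.2⟩, ⟨hppos p, hcountF.1, hcountF.2⟩⟩
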